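/- For n > 2, every maximal face of the completely positive cone CP(n) has dimension at least n. -/

import Mathlib

open Matrix

/-- The completely positive cone `CP(n) = cone{xxᵀ : x ∈ ℝⁿ₊}`. -/
def CPset (n : ℕ) : Set (Matrix (Fin n) (Fin n) ℝ) :=
  {X | ∃ (m : ℕ) (c : Fin m → ℝ) (v : Fin m → Fin n → ℝ),
    (∀ k, 0 ≤ c k) ∧ (∀ k i, 0 ≤ v k i) ∧
    X = ∑ k, c k • Matrix.vecMulVec (v k) (v k)}

/-- A face of the cone `CP(n)`: a nonempty convex subcone `F ⊆ CP(n)` such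
that `x + y ∈ F` with `x, y ∈ CP(n)` implies `x, y ∈ F`. -/
def IsFaceCP (n : ℕ) (F : Set (Matrix (Fin n) (Fin n) ℝ)) : Prop :=
  F.Nonempty ∧ F ⊆ CPset n ∧ Convex ℝ F ∧
    (∀ c : ℝ, 0 < c → ∀ x ∈ F, c • x ∈ F) ∧
    ∀ x ∈ CPset n, ∀ y ∈ CPset n, x + y ∈ F → x ∈ F ∧ y ∈ F

/-- A maximal face of `CP(n)`: a proper face not strictly contained in any
other proper face. -/
def IsMaxFaceCP (n : ℕ) (F : Set (Matrix (Fin n) (Fin n) ℝ)) : Prop :=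
  IsFaceCP n F ∧ F ≠ CPset n ∧
    ∀ G, IsFaceCP n G → G ≠ CPset n → F ⊆ G → G = F

namespace CPaux

variable {n : ℕ}

lemma zero_mem_CP : (0 : Matrix (Fin n) (Fin n) ℝ) ∈ CPset n :=
  ⟨0, Fin.elim0, Fin.elim0, fun k => k.elim0, fun k => k.elim0, by simp⟩

lemma smul_vmv_mem_CP {c : ℝ} {v : Fin n → ℝ} (hc : 0 ≤ c) (hv : ∀ i, 0 ≤ v i) :
    c • vecMulVec v v ∈ CPset n :=
  ⟨1, fun _ => c, fun _ => v, fun _ => hc, fun _ => hv, by simp⟩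

lemma vmv_mem_CP {v : Fin n → ℝ} (hv : ∀ i, 0 ≤ v i) : vecMulVec v v ∈ CPset n := by
  have := smul_vmv_mem_CP (zero_le_one) hv
  simpa using this

lemma add_mem_CP {X Y : Matrix (Fin n) (Fin n) ℝ} (hX : X ∈ CPset n) (hY : Y ∈ CPset n) :
    X + Y ∈ CPset n := by
  obtain ⟨m₁, c₁, v₁, hc₁, hv₁, rfl⟩ := hX
  obtain ⟨m₂, c₂, v₂, hc₂, hv₂, rfl⟩ := hY
  refine ⟨m₁ + m₂, Fin.append c₁ c₂, Fin.append v₁ v₂, ?_, ?_, ?_⟩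
  · intro k
    refine Fin.addCases (fun i => ?_) (fun i => ?_) k
    · simpa using hc₁ i
    · simpa using hc₂ i
  · intro k
    refine Fin.addCases (fun i => ?_) (fun i => ?_) k
    · simpa using hv₁ i
    · simpa using hv₂ i
  · rw [Fin.sum_univ_add]
    simp

lemma sum_mem_CP {ι : Type*} (s : Finset ι) (f : ι → Matrix (Fin n) (Fin n) ℝ)
    (h : ∀ i ∈ s, f i ∈ CPset n) : (∑ i ∈ s, f i) ∈ CPset n := by
  classical
  induction s using Finset.induction_on with
  | empty => simpa using zero_mem_CP
  | insert a s hnotmem ih =>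
    rw [Finset.sum_insert hnotmem]
    exact add_mem_CP (h _ (Finset.mem_insert_self _ _))
      (ih fun i hi => h i (Finset.mem_insert_of_mem hi))

lemma vmv_mulVec (v w : Fin n → ℝ) : vecMulVec v v *ᵥ w = (v ⬝ᵥ w) • v := by
  funext i
  simp [vecMulVec_apply, mulVec, dotProduct, Finset.mul_sum, mul_assoc, mul_comm, mul_left_comm]

lemma sum_mulVec {ι : Type*} (s : Finset ι) (M : ι → Matrix (Fin n) (Fin n) ℝ)
    (x : Fin n → ℝ) : (∑ i ∈ s, M i) *ᵥ x = ∑ i ∈ s, M i *ᵥ x := by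
  funext j
  simp only [mulVec, dotProduct, Finset.sum_apply, Finset.sum_mul, Finset.sum_apply', Matrix.sum_apply, Finset.sum_mul]
  rw [Finset.sum_comm]

lemma quad_smul_vmv (c : ℝ) (v w : Fin n → ℝ) :
    w ⬝ᵥ ((c • vecMulVec v v) *ᵥ w) = c * ((v ⬝ᵥ w) * (v ⬝ᵥ w)) := by
  rw [smul_mulVec, vmv_mulVec]
  simp only [dotProduct_smul, smul_eq_mul]
  rw [dotProduct_comm w v]

lemma dp_sum {ι : Type*} (s : Finset ι) (w : Fin n → ℝ) (f : ι → Fin n → ℝ) :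
    w ⬝ᵥ (∑ i ∈ s, f i) = ∑ i ∈ s, w ⬝ᵥ f i := by
  simp only [dotProduct, Finset.sum_apply, Finset.mul_sum]
  rw [Finset.sum_comm]

lemma smul_mem_CP {c : ℝ} {X : Matrix (Fin n) (Fin n) ℝ} (hc : 0 ≤ c) (hX : X ∈ CPset n) :
    c • X ∈ CPset n := by
  obtain ⟨m, cc, v, hcc, hv, rfl⟩ := hX
  rw [Finset.smul_sum]
  simp only [smul_smul]
  exact ⟨m, fun k => c * cc k, v, fun k => mul_nonneg hc (hcc k), hv, rfl⟩


section Face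

variable {F : Set (Matrix (Fin n) (Fin n) ℝ)}

/-- The set of nonnegative vectors generating rank-one elements of `F`. -/
def Sgen (n : ℕ) (F : Set (Matrix (Fin n) (Fin n) ℝ)) : Set (Fin n → ℝ) :=
  {v | (∀ i, 0 ≤ v i) ∧ vecMulVec v v ∈ F}

lemma term_mem_face (hface : IsFaceCP n F) {m : ℕ} {c : Fin m → ℝ} {v : Fin m → Fin n → ℝ}
    (hc : ∀ k, 0 ≤ c k) (hv : ∀ k i, 0 ≤ v k i)
    (hX : (∑ k, c k • vecMulVec (v k) (v k)) ∈ F) (k : Fin m) :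
    c k • vecMulVec (v k) (v k) ∈ F := by
  classical
  have hx : c k • vecMulVec (v k) (v k) ∈ CPset n := smul_vmv_mem_CP (hc k) (hv k)
  have hy : (∑ j ∈ Finset.univ.erase k, c j • vecMulVec (v j) (v j)) ∈ CPset n :=
    sum_mem_CP _ _ (fun j _ => smul_vmv_mem_CP (hc j) (hv j))
  have hsum : c k • vecMulVec (v k) (v k)
      + ∑ j ∈ Finset.univ.erase k, c j • vecMulVec (v j) (v j)
      = ∑ k, c k • vecMulVec (v k) (v k) :=
    Finset.add_sum_erase _ (fun k => c k • vecMulVec (v k) (v k)) (Finset.mem_univ k)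
  exact (hface.2.2.2.2 _ hx _ hy (by rw [hsum]; exact hX)).1

lemma vmv_mem_face (hface : IsFaceCP n F) {m : ℕ} {c : Fin m → ℝ} {v : Fin m → Fin n → ℝ}
    (hc : ∀ k, 0 ≤ c k) (hv : ∀ k i, 0 ≤ v k i)
    (hX : (∑ k, c k • vecMulVec (v k) (v k)) ∈ F) (k : Fin m) (hck : 0 < c k) :
    v k ∈ Sgen n F := by
  refine ⟨hv k, ?_⟩
  have h1 := hface.2.2.2.1 (c k)⁻¹ (by positivity) _ (term_mem_face hface hc hv hX k)
  rwa [smul_smul, inv_mul_cancel₀ hck.ne', one_smul] at h1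

lemma quad_nonneg {w : Fin n → ℝ} {X : Matrix (Fin n) (Fin n) ℝ} (hX : X ∈ CPset n) :
    0 ≤ w ⬝ᵥ X *ᵥ w := by
  obtain ⟨m, c, v, hc, hv, rfl⟩ := hX
  rw [sum_mulVec, dp_sum]
  refine Finset.sum_nonneg fun k _ => ?_
  rw [quad_smul_vmv]
  exact mul_nonneg (hc k) (mul_self_nonneg _)

lemma quad_zero_of_mem_face (hface : IsFaceCP n F) {w : Fin n → ℝ}
    (hworth : ∀ v ∈ Sgen n F, v ⬝ᵥ w = 0) {X : Matrix (Fin n) (Fin n) ℝ} (hXF : X ∈ F) :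
    w ⬝ᵥ X *ᵥ w = 0 := by
  obtain ⟨m, c, v, hc, hv, hXeq⟩ := hface.2.1 hXF
  rw [hXeq] at hXF ⊢
  rw [sum_mulVec, dp_sum]
  refine Finset.sum_eq_zero fun k _ => ?_
  rw [quad_smul_vmv]
  rcases (hc k).lt_or_eq with hck | hck
  · rw [hworth _ (vmv_mem_face hface hc hv hXF k hck), mul_zero, mul_zero]
  · rw [← hck, zero_mul]

lemma single_nonneg' (i : Fin n) : ∀ j, 0 ≤ (Pi.single i 1 : Fin n → ℝ) j := by
  intro j
  rcases eq_or_ne j i with rfl | hji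
  · simp
  · simp [Pi.single_eq_of_ne hji]

lemma quad_face (w : Fin n → ℝ) (hw0 : w ≠ 0) :
    IsFaceCP n {X | X ∈ CPset n ∧ w ⬝ᵥ X *ᵥ w = 0} ∧
      {X | X ∈ CPset n ∧ w ⬝ᵥ X *ᵥ w = 0} ≠ CPset n := by
  classical
  constructor
  · refine ⟨⟨0, zero_mem_CP, by simp⟩, fun X hX => hX.1, ?_, ?_, ?_⟩
    · intro X hX Y hY a b ha hb hab
      refine ⟨add_mem_CP (smul_mem_CP ha hX.1) (smul_mem_CP hb hY.1), ?_⟩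
      rw [add_mulVec, dotProduct_add, smul_mulVec, smul_mulVec,
        dotProduct_smul, dotProduct_smul, hX.2, hY.2]
      simp
    · intro c hc X hX
      refine ⟨smul_mem_CP hc.le hX.1, ?_⟩
      rw [smul_mulVec, dotProduct_smul, hX.2, smul_eq_mul, mul_zero]
    · intro X hX Y hY hXY
      have h1 : w ⬝ᵥ X *ᵥ w + w ⬝ᵥ Y *ᵥ w = 0 := by
        rw [← hXY.2, add_mulVec, dotProduct_add]
      have h2 := quad_nonneg (w := w) hX
      have h3 := quad_nonneg (w := w) hY
      exact ⟨⟨hX, by linarith⟩, ⟨hY, by linarith⟩⟩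
  · obtain ⟨i, hi⟩ := Function.ne_iff.mp hw0
    simp only [Pi.zero_apply] at hi
    intro hEq
    have hmem : vecMulVec (Pi.single i 1) (Pi.single i 1) ∈ CPset n :=
      vmv_mem_CP (single_nonneg' i)
    rw [← hEq] at hmem
    have h2 := hmem.2
    rw [vmv_mulVec, dotProduct_smul, dotProduct_single, single_dotProduct] at h2
    simp only [mul_one, one_mul, smul_eq_mul] at h2
    exact hi (by nlinarith)

/-- If `w` is a nonzero vector orthogonal to every generator of a maximal face `F`,
then the generators of `F` are exactly the nonnegative vectors orthogonal to `w`. -/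
lemma S_eq_of_orth (hF : IsMaxFaceCP n F) {w : Fin n → ℝ} (hw0 : w ≠ 0)
    (hworth : ∀ v ∈ Sgen n F, v ⬝ᵥ w = 0) :
    Sgen n F = {v | (∀ i, 0 ≤ v i) ∧ v ⬝ᵥ w = 0} := by
  obtain ⟨hGface, hGne⟩ := quad_face w hw0
  have hFG : F ⊆ {X | X ∈ CPset n ∧ w ⬝ᵥ X *ᵥ w = 0} := fun X hX =>
    ⟨hF.1.2.1 hX, quad_zero_of_mem_face hF.1 hworth hX⟩
  have hGF : {X | X ∈ CPset n ∧ w ⬝ᵥ X *ᵥ w = 0} = F := hF.2.2 _ hGface hGne hFG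
  ext v
  constructor
  · rintro ⟨hv1, hv2⟩
    refine ⟨hv1, ?_⟩
    rw [← hGF] at hv2
    have h2 := hv2.2
    rw [vmv_mulVec, dotProduct_smul, smul_eq_mul, dotProduct_comm w v] at h2
    exact mul_self_eq_zero.mp h2
  · rintro ⟨hv1, hv2⟩
    refine ⟨hv1, ?_⟩
    rw [← hGF]
    refine ⟨vmv_mem_CP hv1, ?_⟩
    rw [vmv_mulVec, hv2, zero_smul, dotProduct_zero]

end Face

section LI

lemma li_vmv {ι : Type*} {u : ι → Fin n → ℝ} (h : LinearIndependent ℝ u) :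
    LinearIndependent ℝ fun k => vecMulVec (u k) (u k) := by
  rw [linearIndependent_iff']
  intro s g hsum k hk
  have key : ∀ x : Fin n → ℝ, ∀ j ∈ s, g j * (u j ⬝ᵥ x) = 0 := by
    intro x
    refine linearIndependent_iff'.mp h s (fun j => g j * (u j ⬝ᵥ x)) ?_
    have hx := congrArg (fun M => M *ᵥ x) hsum
    simp only [zero_mulVec] at hx
    rw [sum_mulVec] at hx
    calc ∑ j ∈ s, (g j * (u j ⬝ᵥ x)) • u j
        = ∑ j ∈ s, (g j • vecMulVec (u j) (u j)) *ᵥ x := by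
          refine Finset.sum_congr rfl fun j _ => ?_
          rw [smul_mulVec, vmv_mulVec, smul_smul]
      _ = 0 := hx
  have hk2 := key (u k) k hk
  have hne : u k ⬝ᵥ u k ≠ 0 := fun h0 => h.ne_zero k (dotProduct_self_eq_zero.mp h0)
  exact (mul_eq_zero.mp hk2).resolve_right hne

lemma card_le_finrank_span {ι : Type*} [Fintype ι] {F : Set (Matrix (Fin n) (Fin n) ℝ)}
    {f : ι → Matrix (Fin n) (Fin n) ℝ} (hmem : ∀ i, f i ∈ F) (hli : LinearIndependent ℝ f) :
    Fintype.card ι ≤ Module.finrank ℝ (Submodule.span ℝ F) := by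
  have hmem' : ∀ i, f i ∈ Submodule.span ℝ F := fun i => Submodule.subset_span (hmem i)
  have hg : LinearIndependent ℝ (fun i => (⟨f i, hmem' i⟩ : Submodule.span ℝ F)) := by
    refine LinearIndependent.of_comp (Submodule.span ℝ F).subtype ?_
    exact hli
  exact hg.fintype_card_le_finrank

lemma li_option_vmv {ι : Type*} {u : ι → Fin n → ℝ} (h : LinearIndependent ℝ u)
    (s : Fin n → ℝ) {p q : Fin n}
    (hzero : ∀ k, u k p * u k q = 0)
    (hne : s p * s q ≠ 0) :
    LinearIndependent ℝ (fun o : Option ι => Option.casesOn' o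
      (vecMulVec s s) (fun k => vecMulVec (u k) (u k))) := by
  refine LinearIndependent.option (li_vmv h) ?_
  intro hmem
  have hzero' : ∀ X ∈ Submodule.span ℝ (Set.range fun k => vecMulVec (u k) (u k)),
      X p q = 0 := by
    intro X hX
    induction hX using Submodule.span_induction with
    | mem x hx =>
      obtain ⟨k, rfl⟩ := hx
      simpa [vecMulVec_apply] using hzero k
    | zero => simp
    | add x y _ _ hx hy => simp [Matrix.add_apply, hx, hy]
    | smul c x _ hx => simp [Matrix.smul_apply, hx]
  exact hne (by simpa [vecMulVec_apply] using hzero' _ hmem)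

lemma li_single {i : Fin n} :
    LinearIndependent ℝ (fun j : {j : Fin n // j ≠ i} => (Pi.single j.1 1 : Fin n → ℝ)) := by
  have hb : LinearIndependent ℝ (fun j : Fin n => (Pi.single j 1 : Fin n → ℝ)) := by
    have h2 : ⇑(Pi.basisFun ℝ (Fin n)) = fun j : Fin n => (Pi.single j 1 : Fin n → ℝ) :=
      funext fun j => Pi.basisFun_apply ℝ (Fin n) j
    have := (Pi.basisFun ℝ (Fin n)).linearIndependent
    rwa [h2] at this
  exact hb.comp Subtype.val Subtype.val_injective

end LI

section Uaux

open scoped Classical in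
/-- Auxiliary nonnegative vectors orthogonal to a mixed-sign vector `w`. -/
noncomputable def uaux (w : Fin n → ℝ) (i₀ j₀ k : Fin n) : Fin n → ℝ :=
  if 0 < w k then (-(w j₀)) • (Pi.single k 1 : Fin n → ℝ) + (w k) • (Pi.single j₀ 1 : Fin n → ℝ)
  else (w i₀) • (Pi.single k 1 : Fin n → ℝ) + (-(w k)) • (Pi.single i₀ 1 : Fin n → ℝ)

variable {w : Fin n → ℝ} {i₀ j₀ : Fin n}

lemma u_nonneg (hi₀ : 0 < w i₀) (hj₀ : w j₀ < 0) (k : Fin n) :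
    ∀ i, 0 ≤ uaux w i₀ j₀ k i := by
  intro i
  unfold uaux
  split_ifs with h
  · simp only [Pi.add_apply, Pi.smul_apply, smul_eq_mul, Pi.single_apply]
    split_ifs <;> nlinarith
  · push_neg at h
    simp only [Pi.add_apply, Pi.smul_apply, smul_eq_mul, Pi.single_apply]
    split_ifs <;> nlinarith

lemma u_dot (k : Fin n) : uaux w i₀ j₀ k ⬝ᵥ w = 0 := by
  unfold uaux
  split_ifs with h <;>
    · rw [add_dotProduct, smul_dotProduct, smul_dotProduct, single_dotProduct,
        single_dotProduct, smul_eq_mul, smul_eq_mul]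
      ring

lemma u_supp (k : Fin n) {m : Fin n} (h1 : m ≠ k) (h2 : m ≠ i₀) (h3 : m ≠ j₀) :
    uaux w i₀ j₀ k m = 0 := by
  unfold uaux
  split_ifs with h <;>
    simp [Pi.single_eq_of_ne h1, Pi.single_eq_of_ne h2, Pi.single_eq_of_ne h3]

lemma u_diag (hi₀ : 0 < w i₀) (hj₀ : w j₀ < 0) (k : Fin n) (hk : k ≠ j₀) :
    0 < uaux w i₀ j₀ k k := by
  unfold uaux
  split_ifs with h
  · simp only [Pi.add_apply, Pi.smul_apply, smul_eq_mul, Pi.single_eq_same,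
      Pi.single_eq_of_ne hk, mul_one, mul_zero, add_zero]
    linarith
  · have hki : k ≠ i₀ := fun e => h (e ▸ hi₀)
    simp only [Pi.add_apply, Pi.smul_apply, smul_eq_mul, Pi.single_eq_same,
      Pi.single_eq_of_ne hki, mul_one, mul_zero, add_zero]
    linarith

lemma u_i0_j0 (hi₀ : 0 < w i₀) (hij : i₀ ≠ j₀) : uaux w i₀ j₀ i₀ j₀ = w i₀ := by
  unfold uaux
  rw [if_pos hi₀]
  simp [Pi.single_eq_of_ne (Ne.symm hij), Pi.single_eq_same]

lemma li_uaux (hi₀ : 0 < w i₀) (hj₀ : w j₀ < 0) :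
    LinearIndependent ℝ (fun k : {k : Fin n // k ≠ j₀} => uaux w i₀ j₀ k.1) := by
  classical
  have hij : i₀ ≠ j₀ := by intro e; rw [e] at hi₀; linarith
  rw [Fintype.linearIndependent_iff]
  intro g hg
  have hcoord : ∀ m : Fin n,
      ∑ k : {k : Fin n // k ≠ j₀}, g k • uaux w i₀ j₀ k.1 m = 0 := by
    intro m
    have := congrFun hg m
    simpa [Finset.sum_apply] using this
  have step1 : ∀ k : {k : Fin n // k ≠ j₀}, k.1 ≠ i₀ → g k = 0 := by
    intro k hk
    have h1 := hcoord k.1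
    rw [Fintype.sum_eq_single k (fun b hb => ?_)] at h1
    · have hd := u_diag hi₀ hj₀ k.1 k.2
      simp only [smul_eq_mul] at h1
      exact (mul_eq_zero.mp h1).resolve_right hd.ne'
    · have hbk : k.1 ≠ b.1 := fun e => hb (Subtype.ext e.symm)
      rw [u_supp b.1 hbk hk k.2, smul_zero]
  intro k
  rcases eq_or_ne k.1 i₀ with hk | hk
  · have h1 := hcoord i₀
    rw [Fintype.sum_eq_single k (fun b hb => ?_)] at h1
    · rw [hk] at h1
      have hd := u_diag hi₀ hj₀ i₀ hij
      simp only [smul_eq_mul] at h1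
      exact (mul_eq_zero.mp h1).resolve_right hd.ne'
    · have hb1 : b.1 ≠ i₀ := fun e => hb (Subtype.ext (e.trans hk.symm))
      rw [step1 b hb1, zero_smul]
  · exact step1 k hk

end Uaux

end CPaux

/-- For `n > 2`, every maximal face of the completely positive cone `CP(n)`
has dimension (of its linear span) at least `n`. -/
theorem maxFace_dim_ge (n : ℕ) (hn : 2 < n)
    (F : Set (Matrix (Fin n) (Fin n) ℝ)) (hF : IsMaxFaceCP n F) :
    n ≤ Module.finrank ℝ (Submodule.span ℝ F) := by
  classical
  by_cases htop : Submodule.span ℝ (CPaux.Sgen n F) = ⊤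
  · -- Case 1: the generators span everything
    obtain ⟨t, htS, htspan, htli⟩ := exists_linearIndependent ℝ (CPaux.Sgen n F)
    rw [htop] at htspan
    have hr : Set.range ((↑) : t → (Fin n → ℝ)) = t := Subtype.range_coe
    let b : Module.Basis t ℝ (Fin n → ℝ) := Module.Basis.mk htli (by rw [hr, htspan])
    haveI : Fintype t := FiniteDimensional.fintypeBasisIndex b
    have hcard : Fintype.card t = n := by
      have h1 := Module.finrank_eq_card_basis b
      rw [Module.finrank_pi, Fintype.card_fin] at h1
      exact h1.symm
    have h2 := CPaux.card_le_finrank_span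
      (f := fun v : t => vecMulVec (v : Fin n → ℝ) (v : Fin n → ℝ))
      (fun v => (htS v.2).2) (CPaux.li_vmv htli)
    rwa [hcard] at h2
  · -- Case 2
    have hlt : Submodule.span ℝ (CPaux.Sgen n F) < ⊤ := lt_top_iff_ne_top.mpr htop
    obtain ⟨φ, hφ0, hφmap⟩ := Submodule.exists_dual_map_eq_bot_of_lt_top hlt inferInstance
    set w : Fin n → ℝ := fun i => φ (Pi.single i 1) with hwdef
    have hφeq : ∀ v : Fin n → ℝ, φ v = v ⬝ᵥ w := by
      intro v
      have hv : v = ∑ i, (v i) • (Pi.single i 1 : Fin n → ℝ) := by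
        have h3 := Finset.univ_sum_single v
        have h4 : ∑ i, (v i) • (Pi.single i 1 : Fin n → ℝ) = ∑ i, Pi.single i (v i) :=
          Finset.sum_congr rfl fun i _ => by rw [← Pi.single_smul, smul_eq_mul, mul_one]
        rw [h4, h3]
      conv_lhs => rw [hv]
      rw [map_sum]
      simp only [_root_.map_smul, smul_eq_mul]
      rfl
    have hworth : ∀ v ∈ CPaux.Sgen n F, v ⬝ᵥ w = 0 := by
      intro v hv
      rw [← hφeq]
      have h4 : φ v ∈ Submodule.map φ (Submodule.span ℝ (CPaux.Sgen n F)) :=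
        Submodule.mem_map_of_mem (Submodule.subset_span hv)
      rw [hφmap] at h4
      simpa using h4
    have hw0 : w ≠ 0 := by
      intro h0
      exact hφ0 (LinearMap.ext fun v => by rw [hφeq, h0, dotProduct_zero, LinearMap.zero_apply])
    have hSw := CPaux.S_eq_of_orth hF hw0 hworth
    by_cases hmix : (∃ i, 0 < w i) ∧ (∃ j, w j < 0)
    · -- Case 2a: w has mixed signs
      obtain ⟨⟨i₀, hi₀⟩, ⟨j₀, hj₀⟩⟩ := hmix
      have hij : i₀ ≠ j₀ := by intro e; rw [e] at hi₀; linarith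
      obtain ⟨k₁, hk₁i, hk₁j⟩ : ∃ k₁ : Fin n, k₁ ≠ i₀ ∧ k₁ ≠ j₀ := by
        have h2 : 0 < (({i₀, j₀} : Finset (Fin n))ᶜ).card := by
          rw [Finset.card_compl, Fintype.card_fin]
          have h3 := Finset.card_insert_le i₀ ({j₀} : Finset (Fin n))
          simp only [Finset.card_singleton] at h3
          omega
        obtain ⟨k, hk⟩ := Finset.card_pos.mp h2
        rw [Finset.mem_compl, Finset.mem_insert, Finset.mem_singleton] at hk
        push_neg at hk
        exact ⟨k, hk.1, hk.2⟩
      obtain ⟨q, hqor, hqzero⟩ :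
          ∃ q : Fin n, (q = i₀ ∨ q = j₀) ∧ CPaux.uaux w i₀ j₀ k₁ q = 0 := by
        by_cases h : 0 < w k₁
        · refine ⟨i₀, Or.inl rfl, ?_⟩
          unfold CPaux.uaux
          rw [if_pos h]
          simp [Pi.single_eq_of_ne (Ne.symm hk₁i), Pi.single_eq_of_ne hij]
        · refine ⟨j₀, Or.inr rfl, ?_⟩
          unfold CPaux.uaux
          rw [if_neg h]
          simp [Pi.single_eq_of_ne (Ne.symm hk₁j), Pi.single_eq_of_ne (Ne.symm hij)]
      have humem : ∀ k : Fin n, CPaux.uaux w i₀ j₀ k ∈ CPaux.Sgen n F := by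
        intro k
        rw [hSw]
        exact ⟨CPaux.u_nonneg hi₀ hj₀ k, CPaux.u_dot k⟩
      have hsmem : CPaux.uaux w i₀ j₀ i₀ + CPaux.uaux w i₀ j₀ k₁ ∈ CPaux.Sgen n F := by
        rw [hSw]
        refine ⟨fun i => add_nonneg (CPaux.u_nonneg hi₀ hj₀ i₀ i)
          (CPaux.u_nonneg hi₀ hj₀ k₁ i), ?_⟩
        rw [add_dotProduct, CPaux.u_dot, CPaux.u_dot, add_zero]
      have hz : ∀ k : {k : Fin n // k ≠ j₀},
          CPaux.uaux w i₀ j₀ k.1 k₁ * CPaux.uaux w i₀ j₀ k.1 q = 0 := by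
        intro k
        rcases eq_or_ne k.1 k₁ with e | e
        · rw [e, hqzero, mul_zero]
        · rw [CPaux.u_supp k.1 (Ne.symm e) hk₁i hk₁j, zero_mul]
      have hne : (CPaux.uaux w i₀ j₀ i₀ + CPaux.uaux w i₀ j₀ k₁) k₁ *
          (CPaux.uaux w i₀ j₀ i₀ + CPaux.uaux w i₀ j₀ k₁) q ≠ 0 := by
        have h1 : 0 < (CPaux.uaux w i₀ j₀ i₀ + CPaux.uaux w i₀ j₀ k₁) k₁ := by
          rw [Pi.add_apply, CPaux.u_supp i₀ hk₁i hk₁i hk₁j, zero_add]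
          exact CPaux.u_diag hi₀ hj₀ k₁ hk₁j
        have h2 : 0 < (CPaux.uaux w i₀ j₀ i₀ + CPaux.uaux w i₀ j₀ k₁) q := by
          rw [Pi.add_apply, hqzero, add_zero]
          rcases hqor with rfl | rfl
          · exact CPaux.u_diag hi₀ hj₀ q hij
          · rw [CPaux.u_i0_j0 hi₀ hij]
            exact hi₀
        exact (mul_pos h1 h2).ne'
      have hli := CPaux.li_option_vmv (CPaux.li_uaux hi₀ hj₀)
        (CPaux.uaux w i₀ j₀ i₀ + CPaux.uaux w i₀ j₀ k₁) hz hne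
      have hmemF : ∀ o : Option {k : Fin n // k ≠ j₀}, (Option.casesOn' o
          (vecMulVec (CPaux.uaux w i₀ j₀ i₀ + CPaux.uaux w i₀ j₀ k₁)
            (CPaux.uaux w i₀ j₀ i₀ + CPaux.uaux w i₀ j₀ k₁))
          (fun k => vecMulVec (CPaux.uaux w i₀ j₀ k.1) (CPaux.uaux w i₀ j₀ k.1))) ∈ F := by
        intro o
        cases o with
        | none => exact hsmem.2
        | some k => exact (humem k.1).2
      have hfin := CPaux.card_le_finrank_span hmemF hli
      have hco : Fintype.card (Option {k : Fin n // k ≠ j₀}) = n := by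
        rw [Fintype.card_option]
        have h5 : Fintype.card {k : Fin n // k ≠ j₀} = n - 1 := by
          have h6 := Fintype.card_subtype_compl (fun k : Fin n => k = j₀)
          simp only [Fintype.card_subtype_eq, Fintype.card_fin] at h6
          exact h6
        rw [h5]
        omega
      rwa [hco] at hfin
    · -- Case 2b: w has a weak sign
      push_neg at hmix
      obtain ⟨i, hi⟩ := Function.ne_iff.mp hw0
      simp only [Pi.zero_apply] at hi
      have hsign : (∀ j, 0 ≤ w j) ∨ (∀ j, w j ≤ 0) := by
        by_cases hp : ∃ i, 0 < w i
        · exact Or.inl (hmix hp)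
        · push_neg at hp
          exact Or.inr hp
      have hvi : ∀ v ∈ CPaux.Sgen n F, v i = 0 := by
        intro v hv
        rw [hSw] at hv
        obtain ⟨hv1, hv2⟩ := hv
        rcases hsign with hs | hs
        · have hterm : ∀ j ∈ Finset.univ, 0 ≤ v j * w j :=
            fun j _ => mul_nonneg (hv1 j) (hs j)
          have h7 := (Finset.sum_eq_zero_iff_of_nonneg hterm).mp hv2 i (Finset.mem_univ i)
          rcases mul_eq_zero.mp h7 with h | h
          · exact h
          · exact absurd h hi
        · have hterm : ∀ j ∈ Finset.univ, v j * w j ≤ 0 :=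
            fun j _ => mul_nonpos_of_nonneg_of_nonpos (hv1 j) (hs j)
          have h7 := (Finset.sum_eq_zero_iff_of_nonpos hterm).mp hv2 i (Finset.mem_univ i)
          rcases mul_eq_zero.mp h7 with h | h
          · exact h
          · exact absurd h hi
      have hw0' : (Pi.single i 1 : Fin n → ℝ) ≠ 0 := by
        intro h0
        have h8 := congrFun h0 i
        rw [Pi.single_eq_same, Pi.zero_apply] at h8
        exact one_ne_zero h8
      have hworth' : ∀ v ∈ CPaux.Sgen n F, v ⬝ᵥ (Pi.single i 1 : Fin n → ℝ) = 0 := by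
        intro v hv
        rw [dotProduct_single, mul_one]
        exact hvi v hv
      have hSw' := CPaux.S_eq_of_orth hF hw0' hworth'
      obtain ⟨a, b, hai, hbi, hab⟩ : ∃ a b : Fin n, a ≠ i ∧ b ≠ i ∧ a ≠ b := by
        have h9 : 1 < (Finset.univ.erase i).card := by
          rw [Finset.card_erase_of_mem (Finset.mem_univ i), Finset.card_univ, Fintype.card_fin]
          omega
        obtain ⟨a, ha, b, hb, hab⟩ := Finset.one_lt_card.mp h9
        exact ⟨a, b, Finset.ne_of_mem_erase ha, Finset.ne_of_mem_erase hb, hab⟩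
      have hmemS : ∀ j : Fin n, j ≠ i → (Pi.single j 1 : Fin n → ℝ) ∈ CPaux.Sgen n F := by
        intro j hj
        rw [hSw']
        refine ⟨CPaux.single_nonneg' j, ?_⟩
        rw [dotProduct_single, mul_one, Pi.single_eq_of_ne (Ne.symm hj)]
      have hsum_mem : (Pi.single a 1 + Pi.single b 1 : Fin n → ℝ) ∈ CPaux.Sgen n F := by
        rw [hSw']
        refine ⟨fun m => add_nonneg (CPaux.single_nonneg' a m) (CPaux.single_nonneg' b m), ?_⟩
        rw [add_dotProduct, dotProduct_single, dotProduct_single, mul_one, mul_one,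
          Pi.single_eq_of_ne (Ne.symm hai), Pi.single_eq_of_ne (Ne.symm hbi), add_zero]
      have hz : ∀ j : {j : Fin n // j ≠ i},
          (Pi.single j.1 1 : Fin n → ℝ) a * (Pi.single j.1 1 : Fin n → ℝ) b = 0 := by
        intro j
        rcases eq_or_ne j.1 a with e | e
        · rw [e]
          rw [Pi.single_eq_of_ne (Ne.symm hab), mul_zero]
        · rw [Pi.single_eq_of_ne (fun h => e h.symm), zero_mul]
      have hne : (Pi.single a 1 + Pi.single b 1 : Fin n → ℝ) a *
          (Pi.single a 1 + Pi.single b 1 : Fin n → ℝ) b ≠ 0 := by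
        rw [Pi.add_apply, Pi.add_apply, Pi.single_eq_same, Pi.single_eq_same,
          Pi.single_eq_of_ne hab, Pi.single_eq_of_ne (Ne.symm hab)]
        norm_num
      have hli := CPaux.li_option_vmv (CPaux.li_single (i := i))
        (Pi.single a 1 + Pi.single b 1) hz hne
      have hmemF : ∀ o : Option {j : Fin n // j ≠ i}, (Option.casesOn' o
          (vecMulVec (Pi.single a 1 + Pi.single b 1 : Fin n → ℝ)
            (Pi.single a 1 + Pi.single b 1 : Fin n → ℝ))
          (fun j => vecMulVec (Pi.single j.1 1 : Fin n → ℝ)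
            (Pi.single j.1 1 : Fin n → ℝ))) ∈ F := by
        intro o
        cases o with
        | none => exact hsum_mem.2
        | some j => exact (hmemS j.1 j.2).2
      have hfin := CPaux.card_le_finrank_span hmemF hli
      have hco : Fintype.card (Option {j : Fin n // j ≠ i}) = n := by
        rw [Fintype.card_option]
        have h5 : Fintype.card {j : Fin n // j ≠ i} = n - 1 := by
          have h6 := Fintype.card_subtype_compl (fun j : Fin n => j = i)
          simp only [Fintype.card_subtype_eq, Fintype.card_fin] at h6
          exact h6
        rw [h5]
        omega
      rwa [hco] at hfin
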